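/- arXiv:2603.03868 — 4 statements merged into one kernel-verified Lean document; each statement's English description precedes it below -/
import Mathlib

section
/- For every real y and every complex ζ with Re ζ > 0, the Laplace transform of x ↦ J_{0,1}(x,y) equals 1 - exp(-y/ζ); that is, ∫_0^∞ e^{-xζ} J_{0,1}(x,y) dx = 1 - e^{-y/ζ}. -/
noncomputable def J01 (x y : ℝ) : ℝ :=
  ∑' j : ℕ, (-1 : ℝ) ^ j * x ^ j * y ^ (j + 1) /
    ((Nat.factorial j : ℝ) * (Nat.factorial (j + 1) : ℝ))

open MeasureTheory Set Filter

-- integrability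
lemma integrableOn_pow_mul_cexp {ζ : ℂ} (hζ : 0 < ζ.re) (n : ℕ) :
    IntegrableOn (fun x : ℝ => (x : ℂ) ^ n * Complex.exp (-(x : ℂ) * ζ)) (Set.Ioi 0) := by
  have hreal : IntegrableOn (fun x : ℝ => x ^ (n : ℝ) * Real.exp (-ζ.re * x ^ (1 : ℝ)))
      (Set.Ioi 0) :=
    integrableOn_rpow_mul_exp_neg_mul_rpow (neg_one_lt_zero.trans_le (Nat.cast_nonneg n)) zero_lt_one hζ
  refine (hreal.mono' ?_ ?_)
  · exact (Continuous.aestronglyMeasurable (by continuity)).restrict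
  · filter_upwards [ae_restrict_mem measurableSet_Ioi] with x hx
    have hx0 : (0:ℝ) < x := hx
    rw [norm_mul, norm_pow, Complex.norm_real]
    simp [Complex.norm_exp, Real.rpow_one, Real.rpow_natCast, abs_of_pos hx0, Complex.neg_re, Complex.mul_re, Complex.ofReal_re, Complex.ofReal_im, mul_comm]

lemma tendsto_pow_mul_cexp_atTop {ζ : ℂ} (hζ : 0 < ζ.re) (n : ℕ) :
    Tendsto (fun x : ℝ => (x : ℂ) ^ n * Complex.exp (-(x : ℂ) * ζ)) atTop (nhds 0) := by
  rw [tendsto_zero_iff_norm_tendsto_zero]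
  have h := tendsto_rpow_mul_exp_neg_mul_atTop_nhds_zero n ζ.re hζ
  apply h.congr'
  filter_upwards [eventually_gt_atTop (0:ℝ)] with x hx
  simp [Complex.norm_exp, Real.rpow_natCast, abs_of_pos hx,
    Complex.neg_re, Complex.mul_re, Complex.ofReal_re, Complex.ofReal_im, mul_comm]

lemma hasDerivAt_cexp_neg (ζ : ℂ) (x : ℝ) :
    HasDerivAt (fun x : ℝ => Complex.exp (-(x : ℂ) * ζ))
      (Complex.exp (-(x : ℂ) * ζ) * (-ζ)) x := by
  have h1 : HasDerivAt (fun x : ℝ => -(x : ℂ) * ζ) (-ζ) x := by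
    simpa using ((Complex.ofRealCLM.hasDerivAt (x := x)).neg.mul_const ζ)
  simpa using h1.cexp

lemma integral_pow_mul_cexp {ζ : ℂ} (hζ : 0 < ζ.re) (n : ℕ) :
    ∫ x in Set.Ioi (0:ℝ), (x : ℂ) ^ n * Complex.exp (-(x : ℂ) * ζ)
      = (Nat.factorial n : ℂ) / ζ ^ (n + 1) := by
  have hζ0 : ζ ≠ 0 := fun h => by simp [h] at hζ
  induction n with
  | zero =>
    have key : ∫ x in Set.Ioi (0:ℝ), Complex.exp (-(x : ℂ) * ζ) * (-ζ)
        = 0 - Complex.exp (-(0 : ℂ) * ζ) := by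
      refine integral_Ioi_of_hasDerivAt_of_tendsto' (f := fun x : ℝ => Complex.exp (-(x:ℂ)*ζ))
        (fun x _ => hasDerivAt_cexp_neg ζ x) ?_ ?_
      · exact IntegrableOn.congr_fun ((integrableOn_pow_mul_cexp hζ 0).mul_const (-ζ))
          (fun x _ => by simp) measurableSet_Ioi
      · simpa using tendsto_pow_mul_cexp_atTop hζ 0
    rw [integral_mul_const] at key
    simp only [neg_zero, zero_mul, Complex.exp_zero, zero_sub] at key
    simp only [pow_zero, one_mul, pow_one, Nat.factorial_zero, Nat.cast_one, zero_add]
    rw [eq_div_iff hζ0]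
    linear_combination -key
  | succ n ih =>
    have hd : ∀ x : ℝ, HasDerivAt (fun x : ℝ => (x : ℂ) ^ (n + 1) * Complex.exp (-(x:ℂ)*ζ))
        (((n:ℂ)+1) * (x:ℂ)^n * Complex.exp (-(x:ℂ)*ζ)
          + (x:ℂ)^(n+1) * (Complex.exp (-(x:ℂ)*ζ) * (-ζ))) x := by
      intro x
      have hp : HasDerivAt (fun x : ℝ => (x : ℂ) ^ (n + 1)) (((n:ℂ)+1) * (x:ℂ)^n) x := by
        simpa using (hasDerivAt_pow (n+1) (x:ℂ)).comp_ofReal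
      exact hp.mul (hasDerivAt_cexp_neg ζ x)
    have key : ∫ x in Set.Ioi (0:ℝ), (((n:ℂ)+1) * (x:ℂ)^n * Complex.exp (-(x:ℂ)*ζ)
          + (x:ℂ)^(n+1) * (Complex.exp (-(x:ℂ)*ζ) * (-ζ)))
        = 0 - ((0:ℂ)^(n+1) * Complex.exp (-(0:ℂ)*ζ)) := by
      refine integral_Ioi_of_hasDerivAt_of_tendsto' (fun x _ => hd x) ?_ ?_
      · refine Integrable.add ?_ ?_
        · exact IntegrableOn.congr_fun ((integrableOn_pow_mul_cexp hζ n).const_mul ((n:ℂ)+1))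
            (fun x _ => by ring) measurableSet_Ioi
        · exact IntegrableOn.congr_fun ((integrableOn_pow_mul_cexp hζ (n+1)).mul_const (-ζ))
            (fun x _ => by ring) measurableSet_Ioi
      · simpa using tendsto_pow_mul_cexp_atTop hζ (n+1)
    have hi1 : Integrable (fun x : ℝ => ((n:ℂ)+1) * (x:ℂ)^n * Complex.exp (-(x:ℂ)*ζ))
        ((volume : Measure ℝ).restrict (Set.Ioi 0)) :=
      IntegrableOn.congr_fun ((integrableOn_pow_mul_cexp hζ n).const_mul ((n:ℂ)+1))
        (fun x _ => by ring) measurableSet_Ioi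
    have hi2 : Integrable (fun x : ℝ => (x:ℂ)^(n+1) * (Complex.exp (-(x:ℂ)*ζ) * (-ζ)))
        ((volume : Measure ℝ).restrict (Set.Ioi 0)) :=
      IntegrableOn.congr_fun ((integrableOn_pow_mul_cexp hζ (n+1)).mul_const (-ζ))
        (fun x _ => by ring) measurableSet_Ioi
    rw [integral_add hi1 hi2] at key
    have e1 : ∫ x in Set.Ioi (0:ℝ), ((n:ℂ)+1) * (x:ℂ)^n * Complex.exp (-(x:ℂ)*ζ)
        = ((n:ℂ)+1) * ((Nat.factorial n : ℂ) / ζ ^ (n+1)) := by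
      rw [← ih, ← integral_const_mul]
      congr 1; ext x; ring
    have e2 : ∫ x in Set.Ioi (0:ℝ), (x:ℂ)^(n+1) * (Complex.exp (-(x:ℂ)*ζ) * (-ζ))
        = (∫ x in Set.Ioi (0:ℝ), (x:ℂ)^(n+1) * Complex.exp (-(x:ℂ)*ζ)) * (-ζ) := by
      rw [← integral_mul_const]
      congr 1; ext x; ring
    rw [e1, e2] at key
    simp only [zero_pow (Nat.succ_ne_zero n), zero_mul, sub_zero, mul_zero] at key
    have hne : ζ ^ (n + 1 + 1) ≠ 0 := pow_ne_zero _ hζ0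
    have hne' : ζ ^ (n + 1) ≠ 0 := pow_ne_zero _ hζ0
    have hJ : (∫ x in Set.Ioi (0:ℝ), (x:ℂ)^(n+1) * Complex.exp (-(x:ℂ)*ζ))
        = ((n:ℂ)+1) * ((Nat.factorial n : ℂ) / ζ ^ (n+1)) / ζ := by
      rw [eq_div_iff hζ0]
      linear_combination -key
    rw [hJ, Nat.factorial_succ]
    push_cast
    rw [← mul_div_assoc, div_div, ← pow_succ]

lemma integral_pow_mul_exp_real {b : ℝ} (hb : 0 < b) (j : ℕ) :
    ∫ x in Set.Ioi (0:ℝ), x ^ j * Real.exp (-(b * x)) = (Nat.factorial j : ℝ) / b ^ (j + 1) := by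
  have h := Real.integral_rpow_mul_exp_neg_mul_Ioi (a := (j:ℝ)+1) (by positivity) hb
  rw [add_sub_cancel_right] at h
  have hcg : ∫ x in Set.Ioi (0:ℝ), x ^ j * Real.exp (-(b * x))
      = ∫ t in Set.Ioi (0:ℝ), t ^ (j:ℝ) * Real.exp (-(b * t)) := by
    refine setIntegral_congr_fun measurableSet_Ioi (fun x hx => ?_)
    rw [Real.rpow_natCast]
  have hj : ((j:ℝ)+1) = ((j+1 : ℕ) : ℝ) := by push_cast; ring
  rw [hcg, h, Real.Gamma_nat_eq_factorial, hj, Real.rpow_natCast]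
  rw [one_div, inv_pow, inv_mul_eq_div]

theorem laplace_J01 (y : ℝ) (ζ : ℂ) (hζ : 0 < ζ.re) :
    ∫ x in Set.Ioi (0 : ℝ), Complex.exp (-(x : ℂ) * ζ) * (J01 x y : ℂ)
      = 1 - Complex.exp (-(y : ℂ) / ζ) := by
  have hζ0 : ζ ≠ 0 := fun h => by simp [h] at hζ
  set c : ℕ → ℂ := fun j => (-1:ℂ)^j * (y:ℂ)^(j+1) /
      ((Nat.factorial j : ℂ) * (Nat.factorial (j+1) : ℂ)) with hc
  set F : ℕ → ℝ → ℂ := fun j x => c j * ((x:ℂ)^j * Complex.exp (-(x:ℂ)*ζ)) with hF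
  -- step 1 : rewrite integrand as tsum
  have step1 : ∀ x : ℝ, Complex.exp (-(x : ℂ) * ζ) * (J01 x y : ℂ) = ∑' j, F j x := by
    intro x
    rw [J01, Complex.ofReal_tsum, ← tsum_mul_left]
    refine tsum_congr fun j => ?_
    simp only [hF, hc]
    push_cast
    ring
  -- integrability of each F j
  have hInt : ∀ j : ℕ, Integrable (F j) ((volume : Measure ℝ).restrict (Set.Ioi 0)) :=
    fun j => (integrableOn_pow_mul_cexp hζ j).const_mul (c j)
  -- norm of c j
  have hcnorm : ∀ j : ℕ, ‖c j‖ = |y|^(j+1) / ((Nat.factorial j : ℝ) * (Nat.factorial (j+1) : ℝ)) := by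
    intro j
    rw [hc]
    simp [map_div₀, map_mul, map_pow, Complex.norm_real,
      Complex.norm_natCast]
  -- summability of integrals of norms
  have hSum : Summable (fun j => ∫ x in Set.Ioi (0:ℝ), ‖F j x‖) := by
    have heq : ∀ j : ℕ, (∫ x in Set.Ioi (0:ℝ), ‖F j x‖)
        = (|y| / ζ.re) ^ (j+1) / (Nat.factorial (j+1) : ℝ) := by
      intro j
      have hptw : ∀ x ∈ Set.Ioi (0:ℝ), ‖F j x‖
          = ‖c j‖ * (x ^ j * Real.exp (-(ζ.re * x))) := by
        intro x hx
        have hx0 : (0:ℝ) < x := hx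
        simp [hF, map_mul, map_pow, Complex.norm_real,
          Complex.norm_exp, abs_of_pos hx0, Complex.neg_re, Complex.mul_re, mul_comm]
      rw [setIntegral_congr_fun measurableSet_Ioi hptw, integral_const_mul,
        integral_pow_mul_exp_real hζ j, hcnorm j]
      have h1 : (Nat.factorial j : ℝ) ≠ 0 := Nat.cast_ne_zero.mpr (Nat.factorial_ne_zero j)
      have h2 : (Nat.factorial (j+1) : ℝ) ≠ 0 := Nat.cast_ne_zero.mpr (Nat.factorial_ne_zero _)
      have h3 : ζ.re ≠ 0 := hζ.ne'
      rw [div_pow]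
      field_simp
    refine Summable.congr ?_ (fun j => (heq j).symm)
    exact (summable_nat_add_iff 1).mpr (Real.summable_pow_div_factorial (|y| / ζ.re))
  -- swap integral and sum
  have swap := integral_tsum_of_summable_integral_norm hInt hSum
  calc ∫ x in Set.Ioi (0:ℝ), Complex.exp (-(x : ℂ) * ζ) * (J01 x y : ℂ)
      = ∫ x in Set.Ioi (0:ℝ), ∑' j, F j x :=
        integral_congr_ae (Filter.Eventually.of_forall fun x => step1 x)
    _ = ∑' j, ∫ x in Set.Ioi (0:ℝ), F j x := swap.symm
    _ = ∑' j : ℕ, -((-(y:ℂ)/ζ)^(j+1) / (Nat.factorial (j+1) : ℂ)) := by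
        refine tsum_congr fun j => ?_
        simp only [hF]
        rw [integral_const_mul, integral_pow_mul_cexp hζ j]
        simp only [hc]
        have hz : ζ ^ (j+1) ≠ 0 := pow_ne_zero _ hζ0
        have h1 : (Nat.factorial j : ℂ) ≠ 0 := Nat.cast_ne_zero.mpr (Nat.factorial_ne_zero j)
        have h2 : (Nat.factorial (j+1) : ℂ) ≠ 0 := Nat.cast_ne_zero.mpr (Nat.factorial_ne_zero _)
        rw [div_pow]
        field_simp
        push_cast [Nat.factorial_succ]
        ring
    _ = 1 - Complex.exp (-(y : ℂ) / ζ) := by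
        rw [tsum_neg]
        have hsum : Summable (fun n : ℕ => (-(y:ℂ)/ζ) ^ n / (Nat.factorial n : ℂ)) :=
          NormedSpace.expSeries_div_summable _
        have hexp : Complex.exp (-(y:ℂ)/ζ) = ∑' n : ℕ, (-(y:ℂ)/ζ) ^ n / (Nat.factorial n : ℂ) := by
          rw [Complex.exp_eq_exp_ℂ, NormedSpace.exp_eq_tsum_div]
        rw [hsum.tsum_eq_zero_add] at hexp
        simp only [pow_zero, Nat.factorial_zero, Nat.cast_one, div_one] at hexp
        rw [hexp]
        ring
end

section
/- Let ψ : ℝ_{>0} → ℝ be C³ with ψ'' > 0 and ψ''' < 0 on ℝ_{>0}, extending continuously to ℝ_{≥0}. Suppose t₀ ∈ ℝ_{>0} satisfies ψ'(t₀) = 0, and let 0 < t₀ < t₁ < ∞. Then ∫_0^∞ exp(-ψ(t)) dt ≤ e^{-ψ(t₀)} √(2π/ψ''(t₁)) + e^{-ψ(t₁)}/ψ'(t₁). -/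
open Real MeasureTheory

theorem integral_exp_neg_psi_bound
    (ψ ψ' ψ'' ψ''' : ℝ → ℝ)
    (hcont : ContinuousOn ψ (Set.Ici 0))
    (hd1 : ∀ t : ℝ, 0 < t → HasDerivAt ψ (ψ' t) t)
    (hd2 : ∀ t : ℝ, 0 < t → HasDerivAt ψ' (ψ'' t) t)
    (hd3 : ∀ t : ℝ, 0 < t → HasDerivAt ψ'' (ψ''' t) t)
    (hpos : ∀ t : ℝ, 0 < t → 0 < ψ'' t)
    (hneg : ∀ t : ℝ, 0 < t → ψ''' t < 0)
    (t₀ t₁ : ℝ) (ht₀ : 0 < t₀) (hcrit : ψ' t₀ = 0) (ht₀₁ : t₀ < t₁) :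
    ∫ t in Set.Ioi (0 : ℝ), Real.exp (-ψ t)
      ≤ Real.exp (-ψ t₀) * Real.sqrt (2 * π / ψ'' t₁)
        + Real.exp (-ψ t₁) / ψ' t₁ := by
  have ht₁ : (0:ℝ) < t₁ := ht₀.trans ht₀₁
  set c := ψ'' t₁ with hcdef
  set a := ψ' t₁ with hadef
  have hc : 0 < c := hpos t₁ ht₁
  -- ψ' is strictly monotone on (0,∞)
  have hψ'mono : StrictMonoOn ψ' (Set.Ioi 0) := by
    apply strictMonoOn_of_deriv_pos (convex_Ioi 0)
      (fun x hx => (hd2 x hx).continuousAt.continuousWithinAt)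
    intro x hx
    rw [interior_Ioi] at hx
    rw [(hd2 x hx).deriv]
    exact hpos x hx
  have ha : 0 < a := by
    have := hψ'mono (Set.mem_Ioi.2 ht₀) (Set.mem_Ioi.2 ht₁) ht₀₁
    rwa [hcrit] at this
  -- ψ'' is strictly antitone on (0,∞)
  have hψ''anti : StrictAntiOn ψ'' (Set.Ioi 0) := by
    apply strictAntiOn_of_deriv_neg (convex_Ioi 0)
      (fun x hx => (hd3 x hx).continuousAt.continuousWithinAt)
    intro x hx
    rw [interior_Ioi] at hx
    rw [(hd3 x hx).deriv]
    exact hneg x hx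
  -- g : quadratic correction
  set g : ℝ → ℝ := fun t => ψ t - c/2 * (t - t₀)^2 with hgdef
  set g' : ℝ → ℝ := fun t => ψ' t - c * (t - t₀) with hg'def
  have hgderiv : ∀ x : ℝ, 0 < x → HasDerivAt g (g' x) x := by
    intro x hx
    have h1 : HasDerivAt (fun t : ℝ => c/2 * (t - t₀)^2) (c/2 * (2*(x - t₀))) x := by
      have h2 : HasDerivAt (fun t : ℝ => (t - t₀)^2) (2*(x - t₀)) x := by
        simpa using ((hasDerivAt_id x).sub_const t₀).fun_pow 2
      exact h2.const_mul _
    have h3 := (hd1 x hx).sub h1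
    refine h3.congr_deriv ?_
    simp only [hg'def]
    ring
  have hg'deriv : ∀ x : ℝ, 0 < x → HasDerivAt g' (ψ'' x - c) x := by
    intro x hx
    have h1 : HasDerivAt (fun t : ℝ => c * (t - t₀)) c x := by
      simpa using ((hasDerivAt_id x).sub_const t₀).const_mul c
    exact (hd2 x hx).sub h1
  -- g' is strictly monotone on (0, t₁]
  have hg'mono : StrictMonoOn g' (Set.Ioc 0 t₁) := by
    apply strictMonoOn_of_deriv_pos (convex_Ioc 0 t₁)
      (fun x hx => (hg'deriv x hx.1).continuousAt.continuousWithinAt)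
    intro x hx
    rw [interior_Ioc] at hx
    rw [(hg'deriv x hx.1).deriv]
    have := hψ''anti (Set.mem_Ioi.2 hx.1) (Set.mem_Ioi.2 ht₁) hx.2
    linarith
  have hg't₀ : g' t₀ = 0 := by simp [hg'def, hcrit]
  -- the key quadratic lower bound on (0, t₁]
  have hA : ∀ t ∈ Set.Ioc (0:ℝ) t₁, g t₀ ≤ g t := by
    intro t ht
    rcases le_total t t₀ with h | h
    · have hanti : AntitoneOn g (Set.Ioc 0 t₀) := by
        apply antitoneOn_of_deriv_nonpos (convex_Ioc 0 t₀)
          (fun x hx => (hgderiv x hx.1).continuousAt.continuousWithinAt)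
        · intro x hx
          rw [interior_Ioc] at hx
          exact (hgderiv x hx.1).differentiableAt.differentiableWithinAt
        · intro x hx
          rw [interior_Ioc] at hx
          rw [(hgderiv x hx.1).deriv]
          have := hg'mono (Set.mem_Ioc.2 ⟨hx.1, (hx.2.trans ht₀₁).le⟩)
            (Set.mem_Ioc.2 ⟨ht₀, ht₀₁.le⟩) hx.2
          rw [hg't₀] at this
          linarith
      exact hanti (Set.mem_Ioc.2 ⟨ht.1, h⟩) (Set.mem_Ioc.2 ⟨ht₀, le_rfl⟩) h
    · have hmono : MonotoneOn g (Set.Icc t₀ t₁) := by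
        apply monotoneOn_of_deriv_nonneg (convex_Icc t₀ t₁)
          (fun x hx => (hgderiv x (ht₀.trans_le hx.1)).continuousAt.continuousWithinAt)
        · intro x hx
          rw [interior_Icc] at hx
          exact (hgderiv x (ht₀.trans hx.1)).differentiableAt.differentiableWithinAt
        · intro x hx
          rw [interior_Icc] at hx
          rw [(hgderiv x (ht₀.trans hx.1)).deriv]
          have := hg'mono (Set.mem_Ioc.2 ⟨ht₀, ht₀₁.le⟩)
            (Set.mem_Ioc.2 ⟨ht₀.trans hx.1, hx.2.le⟩) hx.1
          rw [hg't₀] at this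
          linarith
      exact hmono (Set.mem_Icc.2 ⟨le_rfl, ht₀₁.le⟩) (Set.mem_Icc.2 ⟨h, ht.2⟩) h
  have hApt : ∀ t ∈ Set.Ioc (0:ℝ) t₁,
      Real.exp (-ψ t) ≤ Real.exp (-ψ t₀) * Real.exp (-(c/2) * (t - t₀)^2) := by
    intro t ht
    have := hA t ht
    rw [← Real.exp_add]
    apply Real.exp_le_exp.2
    simp only [hgdef] at this
    nlinarith [this]
  -- linear lower bound on [t₁, ∞)
  have hB : ∀ t ∈ Set.Ici t₁, ψ t₁ + a * (t - t₁) ≤ ψ t := by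
    intro t ht
    set h : ℝ → ℝ := fun t => ψ t - a * t with hhdef
    have hmono : MonotoneOn h (Set.Ici t₁) := by
      apply monotoneOn_of_deriv_nonneg (convex_Ici t₁)
      · intro x hx
        exact ((hd1 x (ht₁.trans_le hx)).sub
          ((hasDerivAt_id x).const_mul a)).continuousAt.continuousWithinAt
      · intro x hx
        rw [interior_Ici] at hx
        exact ((hd1 x (ht₁.trans hx)).sub
          (by simpa using (hasDerivAt_id x).const_mul a)).differentiableAt.differentiableWithinAt
      · intro x hx
        rw [interior_Ici] at hx
        have hder : HasDerivAt h (ψ' x - a) x :=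
          (hd1 x (ht₁.trans hx)).sub (by simpa using (hasDerivAt_id x).const_mul a)
        rw [hder.deriv]
        have := hψ'mono (Set.mem_Ioi.2 ht₁) (Set.mem_Ioi.2 (ht₁.trans hx)) hx
        linarith
    have := hmono (Set.mem_Ici.2 le_rfl) ht ht
    simp only [hhdef] at this
    linarith
  have hBpt : ∀ t ∈ Set.Ioi t₁,
      Real.exp (-ψ t) ≤ Real.exp (-ψ t₁) * Real.exp (-a * (t - t₁)) := by
    intro t ht
    have := hB t (Set.mem_Ici.2 (le_of_lt ht))
    rw [← Real.exp_add]
    apply Real.exp_le_exp.2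
    linarith
  -- integrability facts
  have hIoc : IntegrableOn (fun t => Real.exp (-ψ t)) (Set.Ioc 0 t₁) := by
    have hcont' : ContinuousOn (fun t => Real.exp (-ψ t)) (Set.Icc 0 t₁) :=
      Real.continuous_exp.comp_continuousOn
        ((hcont.mono (Set.Icc_subset_Ici_self)).neg)
    exact hcont'.integrableOn_Icc.mono_set Set.Ioc_subset_Icc_self
  have hGauss : Integrable (fun t : ℝ => Real.exp (-(c/2) * (t - t₀)^2)) :=
    (integrable_exp_neg_mul_sq (half_pos hc)).comp_sub_right t₀
  have hExpDecay : IntegrableOn (fun t : ℝ => Real.exp (-a * (t - t₁))) (Set.Ioi t₁) := by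
    have h1 : IntegrableOn (fun t : ℝ => Real.exp (a * t₁) * Real.exp (-a * t))
        (Set.Ioi t₁) := (exp_neg_integrableOn_Ioi t₁ ha).const_mul _
    apply h1.congr_fun _ measurableSet_Ioi
    intro t _
    show Real.exp (a * t₁) * Real.exp (-a * t) = Real.exp (-a * (t - t₁))
    rw [← Real.exp_add]
    ring_nf
  have hmeasIoi : AEStronglyMeasurable (fun t => Real.exp (-ψ t))
      (volume.restrict (Set.Ioi t₁)) := by
    have hψc : ContinuousOn ψ (Set.Ioi t₁) :=
      fun x hx => (hd1 x (ht₁.trans hx)).continuousAt.continuousWithinAt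
    have : ContinuousOn (fun t => Real.exp (-ψ t)) (Set.Ioi t₁) :=
      Real.continuous_exp.comp_continuousOn hψc.neg
    exact this.aestronglyMeasurable measurableSet_Ioi
  have hIoi : IntegrableOn (fun t => Real.exp (-ψ t)) (Set.Ioi t₁) := by
    apply Integrable.mono' (hExpDecay.const_mul (Real.exp (-ψ t₁))) hmeasIoi
    filter_upwards [ae_restrict_mem measurableSet_Ioi] with t ht
    rw [Real.norm_eq_abs, abs_of_pos (Real.exp_pos _)]
    exact hBpt t ht
  -- split the integral
  have hsplit : ∫ t in Set.Ioi (0:ℝ), Real.exp (-ψ t)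
      = (∫ t in Set.Ioc (0:ℝ) t₁, Real.exp (-ψ t))
        + ∫ t in Set.Ioi t₁, Real.exp (-ψ t) := by
    rw [← setIntegral_union (Set.Ioc_disjoint_Ioi le_rfl) measurableSet_Ioi hIoc hIoi,
      Set.Ioc_union_Ioi_eq_Ioi ht₁.le]
  rw [hsplit]
  -- bound the first piece
  have hP1 : (∫ t in Set.Ioc (0:ℝ) t₁, Real.exp (-ψ t))
      ≤ Real.exp (-ψ t₀) * Real.sqrt (2 * π / c) := by
    have h1 : (∫ t in Set.Ioc (0:ℝ) t₁, Real.exp (-ψ t))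
        ≤ ∫ t in Set.Ioc (0:ℝ) t₁,
            Real.exp (-ψ t₀) * Real.exp (-(c/2) * (t - t₀)^2) := by
      apply setIntegral_mono_on hIoc ((hGauss.const_mul _).integrableOn)
        measurableSet_Ioc hApt
    have h2 : (∫ t in Set.Ioc (0:ℝ) t₁,
          Real.exp (-ψ t₀) * Real.exp (-(c/2) * (t - t₀)^2))
        ≤ ∫ t : ℝ, Real.exp (-ψ t₀) * Real.exp (-(c/2) * (t - t₀)^2) := by
      apply setIntegral_le_integral (hGauss.const_mul _)
      filter_upwards with t
      positivity
    have h3 : (∫ t : ℝ, Real.exp (-ψ t₀) * Real.exp (-(c/2) * (t - t₀)^2))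
        = Real.exp (-ψ t₀) * Real.sqrt (2 * π / c) := by
      rw [integral_const_mul]
      congr 1
      have h4 : (∫ t : ℝ, Real.exp (-(c/2) * (t - t₀)^2))
          = ∫ t : ℝ, Real.exp (-(c/2) * t^2) :=
        integral_sub_right_eq_self (fun t => Real.exp (-(c/2) * t^2)) t₀
      rw [h4, integral_gaussian]
      congr 1
      field_simp
    linarith
  -- bound the second piece
  have hP2 : (∫ t in Set.Ioi t₁, Real.exp (-ψ t)) ≤ Real.exp (-ψ t₁) / a := by
    have h1 : (∫ t in Set.Ioi t₁, Real.exp (-ψ t))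
        ≤ ∫ t in Set.Ioi t₁, Real.exp (-ψ t₁) * Real.exp (-a * (t - t₁)) := by
      apply setIntegral_mono_on hIoi (hExpDecay.const_mul _) measurableSet_Ioi
      intro t ht
      exact hBpt t ht
    have h2 : (∫ t in Set.Ioi t₁, Real.exp (-a * (t - t₁))) = 1/a := by
      have hderiv : ∀ x ∈ Set.Ici t₁,
          HasDerivAt (fun t : ℝ => -(Real.exp (-a * (t - t₁)) / a))
            (Real.exp (-a * (x - t₁))) x := by
        intro x _
        have hu : HasDerivAt (fun t : ℝ => -a * (t - t₁)) (-a) x := by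
          simpa using ((hasDerivAt_id x).sub_const t₁).const_mul (-a)
        have := ((hu.exp).div_const a).neg
        refine this.congr_deriv ?_
        rw [mul_neg, neg_div, neg_neg, mul_div_assoc, div_self ha.ne', mul_one]
      have htend : Filter.Tendsto (fun t : ℝ => -(Real.exp (-a * (t - t₁)) / a))
          Filter.atTop (nhds 0) := by
        have h1' : Filter.Tendsto (fun t : ℝ => a * (t - t₁)) Filter.atTop Filter.atTop := by
          apply Filter.Tendsto.const_mul_atTop ha
          simpa [sub_eq_add_neg] using Filter.tendsto_atTop_add_const_right Filter.atTop (-t₁) Filter.tendsto_id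
        have h2' : Filter.Tendsto (fun t : ℝ => Real.exp (-(a * (t - t₁))))
            Filter.atTop (nhds 0) := Real.tendsto_exp_neg_atTop_nhds_zero.comp h1'
        have h3' := (h2'.div_const a).neg
        simp only [zero_div, neg_zero] at h3'
        convert h3' using 2 with t
        ring_nf
      have := integral_Ioi_of_hasDerivAt_of_tendsto' hderiv hExpDecay htend
      rw [this]
      simp
    calc (∫ t in Set.Ioi t₁, Real.exp (-ψ t))
        ≤ ∫ t in Set.Ioi t₁, Real.exp (-ψ t₁) * Real.exp (-a * (t - t₁)) := h1
      _ = Real.exp (-ψ t₁) * (1/a) := by rw [integral_const_mul, h2]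
      _ = Real.exp (-ψ t₁) / a := by ring
  exact add_le_add hP1 hP2
end

section
/- For 0 < q < 1 and θ, σ > 0, ∫_0^∞ exp(θ t^q - σ t) dt ≤ (1/σ)(A σ^{-q/(2(1-q))} + B) exp(D σ^{-q/(1-q)}), where A = 2^{1-q/2} (qθ)^{1/(2(1-q))} √(2π/(1-q)), B = 4/(1-q), and D = (1-q)θ(qθ)^{q/(1-q)}. -/
open Real MeasureTheory Set Filter


lemma key_ineq (q θ σ T c : ℝ) (hq0 : 0 < q) (hq1 : q < 1) (hθ : 0 < θ) (hσ : 0 < σ)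
    (hT : T = (q*θ/σ)^(1/(1-q))) (hc : c = q*(1-q)*θ*(2*T)^(q-2)) :
    ∀ t ∈ Set.Ioc (0:ℝ) (2*T),
      θ*t^q - σ*t ≤ (θ*T^q - σ*T) - c/2*(t-T)^2 := by
  have h1q : 0 < 1 - q := by linarith
  have hqθ : 0 < q*θ/σ := by positivity
  have hTpos : 0 < T := hT ▸ rpow_pos_of_pos hqθ _
  have hσT : q*θ*T^(q-1) = σ := by
    rw [hT, ← Real.rpow_mul hqθ.le]
    have he : 1/(1-q) * (q-1) = -1 := by field_simp; ring
    rw [he, Real.rpow_neg_one]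
    field_simp
  set φ : ℝ → ℝ := fun t => (θ*T^q - σ*T) - c/2*(t-T)^2 - (θ*t^q - σ*t) with hφdef
  set ψ : ℝ → ℝ := fun t => σ - c*(t-T) - q*θ*t^(q-1) with hψdef
  have hφ' : ∀ t : ℝ, 0 < t → HasDerivAt φ (ψ t) t := by
    intro t ht
    have h1 : HasDerivAt (fun t : ℝ => t^q) (q * t^(q-1)) t :=
      Real.hasDerivAt_rpow_const (Or.inl ht.ne')
    have h2 : HasDerivAt (fun t : ℝ => (t-T)^2) (2*(t-T)) t := by
      simpa using ((hasDerivAt_id t).sub_const T).fun_pow 2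
    have := ((hasDerivAt_const t (θ*T^q - σ*T)).fun_sub ((h2.const_mul (c/2)))).fun_sub
      ((h1.const_mul θ).fun_sub ((hasDerivAt_id t).const_mul σ))
    refine this.congr_deriv ?_
    simp [hψdef]; ring
  have hψ' : ∀ t : ℝ, 0 < t → HasDerivAt ψ (q*(1-q)*θ*t^(q-2) - c) t := by
    intro t ht
    have h1 : HasDerivAt (fun t : ℝ => t^(q-1)) ((q-1) * t^(q-1-1)) t :=
      Real.hasDerivAt_rpow_const (Or.inl ht.ne')
    have := ((hasDerivAt_const t σ).fun_sub (((hasDerivAt_id t).sub_const T).const_mul c)).fun_sub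
      ((h1.const_mul (q*θ)))
    refine this.congr_deriv ?_
    have : q - 1 - 1 = q - 2 := by ring
    rw [this]; ring
  have hψmono : MonotoneOn ψ (Ioc 0 (2*T)) := by
    apply monotoneOn_of_deriv_nonneg (convex_Ioc _ _)
    · exact fun t ht => ((hψ' t ht.1).continuousAt).continuousWithinAt
    · intro x hx
      rw [interior_Ioc] at hx
      exact (hψ' x hx.1).differentiableAt.differentiableWithinAt
    · intro x hx
      rw [interior_Ioc] at hx
      rw [(hψ' x hx.1).deriv]
      have hx2 : x^(q-2) ≥ (2*T)^(q-2) :=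
        Real.rpow_le_rpow_of_nonpos hx.1 hx.2.le (by linarith)
      have : c ≤ q*(1-q)*θ*x^(q-2) := by
        rw [hc]; apply mul_le_mul_of_nonneg_left hx2 (by positivity)
      linarith
  have hψT : ψ T = 0 := by simp [hψdef, hσT]
  have hTmem : T ∈ Ioc (0:ℝ) (2*T) := ⟨hTpos, by linarith⟩
  have hφT : φ T = 0 := by simp [hφdef]
  have hcontφ : ∀ s ⊆ Ioc (0:ℝ) (2*T), ContinuousOn φ s := fun s hs t ht =>
    ((hφ' t (hs ht).1).continuousAt).continuousWithinAt
  intro t ht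
  have key : 0 ≤ φ t := by
    rcases le_total t T with h | h
    · have hanti : AntitoneOn φ (Ioc 0 T) := by
        apply antitoneOn_of_deriv_nonpos (convex_Ioc _ _)
        · exact fun x hx => ((hφ' x hx.1).continuousAt).continuousWithinAt
        · intro x hx
          rw [interior_Ioc] at hx
          exact (hφ' x hx.1).differentiableAt.differentiableWithinAt
        · intro x hx
          rw [interior_Ioc] at hx
          rw [(hφ' x hx.1).deriv]
          have := hψmono ⟨hx.1, by have := hx.2; linarith⟩ hTmem hx.2.le
          linarith [hψT ▸ this]
      have := hanti ⟨ht.1, h⟩ ⟨hTpos, le_refl T⟩ h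
      linarith [hφT ▸ this]
    · have hmono : MonotoneOn φ (Icc T (2*T)) := by
        apply monotoneOn_of_deriv_nonneg (convex_Icc _ _)
        · exact fun x hx => ((hφ' x (lt_of_lt_of_le hTpos hx.1)).continuousAt).continuousWithinAt
        · intro x hx
          rw [interior_Icc] at hx
          exact (hφ' x (lt_of_lt_of_le hTpos hx.1.le)).differentiableAt.differentiableWithinAt
        · intro x hx
          rw [interior_Icc] at hx
          rw [(hφ' x (lt_of_lt_of_le hTpos hx.1.le)).deriv]
          have := hψmono hTmem ⟨lt_trans hTpos hx.1, hx.2.le⟩ hx.1.le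
          linarith [hψT ▸ this]
      have := hmono ⟨le_refl T, by linarith⟩ ⟨h, ht.2⟩ h
      linarith [hφT ▸ this]
  simp only [hφdef] at key
  linarith


lemma two_rpow_le (q : ℝ) (hq0 : 0 ≤ q) (hq1 : q ≤ 1) : (2:ℝ)^(q-1) ≤ (1+q)/2 := by
  have h := convexOn_exp.2 (mem_univ (-Real.log 2)) (mem_univ (0:ℝ)) (by linarith : (0:ℝ) ≤ 1 - q) hq0 (by ring)
  simp only [smul_eq_mul, mul_zero, add_zero, exp_zero] at h
  rw [Real.exp_neg, Real.exp_log two_pos] at h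
  calc (2:ℝ)^(q-1) = exp ((q-1) * Real.log 2) := by rw [Real.rpow_def_of_pos two_pos, mul_comm]
    _ = exp ((1-q) * (-Real.log 2)) := by ring_nf
    _ ≤ (1-q) * 2⁻¹ + q * 1 := by simpa using h
    _ = (1+q)/2 := by ring

lemma tail_ineq (q θ σ T : ℝ) (hq0 : 0 < q) (hq1 : q < 1) (hθ : 0 < θ) (hσ : 0 < σ)
    (hT : T = (q*θ/σ)^(1/(1-q))) :
    ∀ t ∈ Set.Ici (2*T),
      θ*t^q - σ*t ≤ (θ*T^q - σ*T) - (1-q)/2*σ*(t-2*T) := by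
  have h1q : 0 < 1 - q := by linarith
  have hqθ : 0 < q*θ/σ := by positivity
  have hTpos : 0 < T := hT ▸ rpow_pos_of_pos hqθ _
  have hσT : q*θ*T^(q-1) = σ := by
    rw [hT, ← Real.rpow_mul hqθ.le]
    have he : 1/(1-q) * (q-1) = -1 := by field_simp; ring
    rw [he, Real.rpow_neg_one]
    field_simp
  set h : ℝ → ℝ := fun t => (θ*T^q - σ*T) - (1-q)/2*σ*(t-2*T) - (θ*t^q - σ*t) with hhdef
  have hh' : ∀ t : ℝ, 0 < t → HasDerivAt h ((1+q)/2*σ - q*θ*t^(q-1)) t := by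
    intro t ht
    have h1 : HasDerivAt (fun t : ℝ => t^q) (q * t^(q-1)) t :=
      Real.hasDerivAt_rpow_const (Or.inl ht.ne')
    have := ((hasDerivAt_const t (θ*T^q - σ*T)).fun_sub
      (((hasDerivAt_id t).sub_const (2*T)).const_mul ((1-q)/2*σ))).fun_sub
      ((h1.const_mul θ).fun_sub ((hasDerivAt_id t).const_mul σ))
    refine this.congr_deriv ?_
    ring
  have hmono : MonotoneOn h (Ici (2*T)) := by
    apply monotoneOn_of_deriv_nonneg (convex_Ici _)
    · exact fun t ht => ((hh' t (by have := ht; simp only [mem_Ici] at this; linarith)).continuousAt).continuousWithinAt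
    · intro x hx
      rw [interior_Ici] at hx
      exact (hh' x (by have := hx; simp only [mem_Ioi] at this; linarith)).differentiableAt.differentiableWithinAt
    · intro x hx
      rw [interior_Ici] at hx
      simp only [mem_Ioi] at hx
      have hxpos : 0 < x := by linarith
      rw [(hh' x hxpos).deriv]
      have h2T : (2*T)^(q-1) = 2^(q-1)*T^(q-1) := Real.mul_rpow (by norm_num) hTpos.le
      have hb : x^(q-1) ≤ (2*T)^(q-1) :=
        Real.rpow_le_rpow_of_nonpos (by linarith) hx.le (by linarith)
      have : q*θ*x^(q-1) ≤ 2^(q-1)*σ := by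
        calc q*θ*x^(q-1) ≤ q*θ*(2*T)^(q-1) := by
              apply mul_le_mul_of_nonneg_left hb (by positivity)
          _ = 2^(q-1)*(q*θ*T^(q-1)) := by rw [h2T]; ring
          _ = 2^(q-1)*σ := by rw [hσT]
      have h2 : (2:ℝ)^(q-1) ≤ (1+q)/2 := two_rpow_le q hq0.le hq1.le
      nlinarith [sq_nonneg σ]
  intro t ht
  simp only [mem_Ici] at ht
  have h2T : h (2*T) ≥ 0 := by
    have := key_ineq q θ σ T (q*(1-q)*θ*(2*T)^(q-2)) hq0 hq1 hθ hσ hT rfl (2*T)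
      ⟨by linarith, le_refl _⟩
    have hcpos : 0 < q*(1-q)*θ*(2*T)^(q-2) := by positivity
    simp only [hhdef]
    nlinarith [sq_nonneg (2*T - T)]
  have := hmono (self_mem_Ici) (mem_Ici.2 ht) ht
  simp only [hhdef] at this h2T ⊢
  linarith


lemma integral_exp_tail (a b : ℝ) (hb : 0 < b) :
    ∫ t in Ioi a, exp (-(b*(t-a))) = 1/b := by
  have hint : IntegrableOn (fun t : ℝ => exp (-(b*(t-a)))) (Ioi a) := by
    have h := (exp_neg_integrableOn_Ioi a hb).const_mul (exp (b*a))
    apply h.congr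
    filter_upwards with x
    rw [← Real.exp_add]
    ring_nf
  have hderiv : ∀ x ∈ Ici a, HasDerivAt (fun t => -exp (-(b*(t-a)))/b) (exp (-(b*(x-a)))) x := by
    intro x _
    have h1 : HasDerivAt (fun t : ℝ => -(b*(t-a))) (-b) x := by
      simpa using (((hasDerivAt_id x).sub_const a).const_mul b).fun_neg
    have := (h1.exp.neg).div_const b
    refine this.congr_deriv ?_
    field_simp
  have htend : Tendsto (fun t => -exp (-(b*(t-a)))/b) atTop (nhds 0) := by
    have h0 : Tendsto (fun t : ℝ => exp (-(b*(t-a)))) atTop (nhds 0) := by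
      apply Real.tendsto_exp_atBot.comp
      have : Tendsto (fun t : ℝ => -(b*(t-a))) atTop atBot := by
        apply tendsto_neg_atBot_iff.2
        exact (tendsto_atTop_add_const_right atTop (-a) tendsto_id).const_mul_atTop hb
      exact this
    have := (h0.neg).div_const b
    simpa using this
  have := integral_Ioi_of_hasDerivAt_of_tendsto' hderiv hint htend
  rw [this]
  field_simp
  simp


lemma integrable_exp_tail (a b : ℝ) (hb : 0 < b) :
    IntegrableOn (fun t : ℝ => exp (-(b*(t-a)))) (Ioi a) := by
  have h := (exp_neg_integrableOn_Ioi a hb).const_mul (exp (b*a))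
  apply h.congr
  filter_upwards with x
  rw [← Real.exp_add]
  ring_nf


lemma rpow_sq (x a : ℝ) (hx : 0 ≤ x) : (x^a)^2 = x^(2*a) := by
  rw [← Real.rpow_natCast (x^a) 2, ← Real.rpow_mul hx]
  norm_num [mul_comm]

lemma M_eq (q θ σ T : ℝ) (hq0 : 0 < q) (hq1 : q < 1) (hθ : 0 < θ) (hσ : 0 < σ)
    (hT : T = (q*θ/σ)^(1/(1-q))) :
    θ*T^q - σ*T = (1-q)*θ*(q*θ)^(q/(1-q))*σ^(-(q/(1-q))) := by
  have h1q : 0 < 1 - q := by linarith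
  have hqθ : 0 < q*θ/σ := by positivity
  have hTpos : 0 < T := hT ▸ rpow_pos_of_pos hqθ _
  have hσT : q*θ*T^(q-1) = σ := by
    rw [hT, ← Real.rpow_mul hqθ.le]
    have he : 1/(1-q) * (q-1) = -1 := by field_simp; ring
    rw [he, Real.rpow_neg_one]; field_simp
  have hTq : σ*T = q*θ*T^q := by
    calc σ*T = (q*θ*T^(q-1))*T^(1:ℝ) := by rw [hσT, Real.rpow_one]
      _ = q*θ*(T^(q-1)*T^(1:ℝ)) := by ring
      _ = q*θ*T^q := by rw [← Real.rpow_add hTpos]; norm_num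
  have hTqval : T^q = (q*θ)^(q/(1-q)) * σ^(-(q/(1-q))) := by
    rw [hT, ← Real.rpow_mul hqθ.le]
    have he : 1/(1-q) * q = q/(1-q) := by ring
    rw [he, Real.div_rpow (by positivity) hσ.le, Real.rpow_neg hσ.le, div_eq_mul_inv]
  rw [hTq, hTqval]; ring

lemma sqrt_term_eq (q θ σ T : ℝ) (hq0 : 0 < q) (hq1 : q < 1) (hθ : 0 < θ) (hσ : 0 < σ)
    (hT : T = (q*θ/σ)^(1/(1-q))) :
    Real.sqrt (2*π/(q*(1-q)*θ*(2*T)^(q-2)))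
      = 1/σ * ((2:ℝ)^(1-q/2) * (q*θ)^(1/(2*(1-q))) * Real.sqrt (2*π/(1-q))) * σ^(-(q/(2*(1-q)))) := by
  have h1q : 0 < 1 - q := by linarith
  have hqθ : 0 < q*θ/σ := by positivity
  have hqθ' : 0 < q*θ := by positivity
  have hTpos : 0 < T := hT ▸ rpow_pos_of_pos hqθ _
  set y := 1/σ * ((2:ℝ)^(1-q/2) * (q*θ)^(1/(2*(1-q))) * Real.sqrt (2*π/(1-q))) * σ^(-(q/(2*(1-q)))) with hy
  have hynn : 0 ≤ y := by positivity
  have hTq2 : T^(q-2) = (q*θ)^((q-2)/(1-q)) * σ^(-((q-2)/(1-q))) := by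
    rw [hT, ← Real.rpow_mul hqθ.le]
    have he : 1/(1-q) * (q-2) = (q-2)/(1-q) := by ring
    rw [he, Real.div_rpow (by positivity) hσ.le, Real.rpow_neg hσ.le, div_eq_mul_inv]
  have hc2 : (2*T)^(q-2) = 2^(q-2) * ((q*θ)^((q-2)/(1-q)) * σ^(-((q-2)/(1-q)))) := by
    rw [Real.mul_rpow (by norm_num) hTpos.le, hTq2]
  have hy2 : y^2 = σ⁻¹*σ⁻¹ * ((2:ℝ)^(2-q) * (q*θ)^(1/(1-q)) * (2*π/(1-q))) * σ^(-(q/(1-q))) := by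
    have e1 : ((2:ℝ)^(1-q/2))^2 = (2:ℝ)^(2-q) := by
      rw [rpow_sq _ _ (by norm_num : (0:ℝ) ≤ 2)]; congr 1; ring
    have e2 : ((q*θ)^(1/(2*(1-q))))^2 = (q*θ)^(1/(1-q)) := by
      rw [rpow_sq _ _ hqθ'.le]; congr 1; field_simp
    have e3 : (σ^(-(q/(2*(1-q)))))^2 = σ^(-(q/(1-q))) := by
      rw [rpow_sq _ _ hσ.le]; congr 1; field_simp
    have e4 : (Real.sqrt (2*π/(1-q)))^2 = 2*π/(1-q) := Real.sq_sqrt (by positivity)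
    have expand : y^2 = (1/σ)^2 * (((2:ℝ)^(1-q/2))^2 * (((q*θ)^(1/(2*(1-q))))^2 *
        ((Real.sqrt (2*π/(1-q)))^2))) * ((σ^(-(q/(2*(1-q)))))^2) := by rw [hy]; ring
    rw [expand, e1, e2, e3, e4]
    field_simp
  have hcpos : 0 < q*(1-q)*θ*(2*T)^(q-2) := by positivity
  have hA : (2:ℝ)^(2-q) * (2:ℝ)^(q-2) = 1 := by
    rw [← Real.rpow_add two_pos]; norm_num
  have hB : (q*θ)^(1/(1-q)) * (q*θ)^((q-2)/(1-q)) = (q*θ)⁻¹ := by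
    rw [← Real.rpow_add hqθ']
    have : 1/(1-q) + (q-2)/(1-q) = -1 := by field_simp; ring
    rw [this, Real.rpow_neg_one]
  have hC : σ^(-(q/(1-q))) * σ^(-((q-2)/(1-q))) = σ*σ := by
    rw [← Real.rpow_add hσ]
    have : -(q/(1-q)) + -((q-2)/(1-q)) = 2 := by field_simp; ring
    rw [this, show (2:ℝ) = ((2:ℕ):ℝ) by norm_num, Real.rpow_natCast]
    ring
  have key : y^2 * (q*(1-q)*θ*(2*T)^(q-2)) = 2*π := by
    calc y^2 * (q*(1-q)*θ*(2*T)^(q-2))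
        = ((2:ℝ)^(2-q) * (2:ℝ)^(q-2)) * ((q*θ)^(1/(1-q)) * (q*θ)^((q-2)/(1-q)))
          * (σ^(-(q/(1-q))) * σ^(-((q-2)/(1-q)))) * (σ⁻¹*σ⁻¹) * (q*(1-q)*θ) * (2*π/(1-q)) := by
          rw [hy2, hc2]; ring
      _ = 1 * (q*θ)⁻¹ * (σ*σ) * (σ⁻¹*σ⁻¹) * (q*(1-q)*θ) * (2*π/(1-q)) := by rw [hA, hB, hC]
      _ = 2*π := by field_simp
  have h2 : 2*π/(q*(1-q)*θ*(2*T)^(q-2)) = y^2 := by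
    rw [div_eq_iff hcpos.ne']
    exact key.symm
  rw [h2, Real.sqrt_sq hynn]

theorem integral_exp_theta_rpow_bound (q θ σ : ℝ)
    (hq0 : 0 < q) (hq1 : q < 1) (hθ : 0 < θ) (hσ : 0 < σ) :
    ∫ t in Set.Ioi (0 : ℝ), Real.exp (θ * t ^ q - σ * t)
      ≤ (1 / σ) *
        ((2 : ℝ) ^ (1 - q / 2) * (q * θ) ^ (1 / (2 * (1 - q))) *
            Real.sqrt (2 * π / (1 - q)) * σ ^ (-(q / (2 * (1 - q))))
          + 4 / (1 - q)) *
        Real.exp ((1 - q) * θ * (q * θ) ^ (q / (1 - q)) * σ ^ (-(q / (1 - q)))) := by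
  have h1q : 0 < 1 - q := by linarith
  set T := (q*θ/σ)^(1/(1-q)) with hT
  set c := q*(1-q)*θ*(2*T)^(q-2) with hc
  have hqθ : 0 < q*θ/σ := by positivity
  have hTpos : 0 < T := rpow_pos_of_pos hqθ _
  have hcpos : 0 < c := by positivity
  set M := θ*T^q - σ*T with hM
  set f : ℝ → ℝ := fun t => exp (θ*t^q - σ*t) with hf
  have hfc : Continuous f := by
    have h1 : Continuous fun t : ℝ => t^q := Real.continuous_rpow_const hq0.le
    exact ((continuous_const.mul h1).sub (continuous_const.mul continuous_id)).rexp
  have int1 : IntegrableOn f (Ioc 0 (2*T)) :=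
    (hfc.integrableOn_Icc (a := 0) (b := 2*T)).mono_set Ioc_subset_Icc_self
  set G : ℝ → ℝ := fun t => exp M * exp (-(c/2) * (t-T)^2) with hG
  have intG : Integrable G := by
    have := ((integrable_exp_neg_mul_sq (half_pos hcpos)).comp_sub_right T).const_mul (exp M)
    exact this
  have hfG : ∀ t ∈ Ioc (0:ℝ) (2*T), f t ≤ G t := by
    intro t ht
    have hk := key_ineq q θ σ T c hq0 hq1 hθ hσ hT hc t ht
    calc f t = exp (θ*t^q - σ*t) := rfl
      _ ≤ exp (M - c/2*(t-T)^2) := exp_le_exp.2 (by linarith)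
      _ = exp M * exp (-(c/2)*(t-T)^2) := by rw [← Real.exp_add]; ring_nf
  have step1 : ∫ t in Ioc (0:ℝ) (2*T), f t ≤ exp M * Real.sqrt (2*π/c) := by
    calc ∫ t in Ioc (0:ℝ) (2*T), f t ≤ ∫ t in Ioc (0:ℝ) (2*T), G t :=
        setIntegral_mono_on int1 intG.integrableOn measurableSet_Ioc hfG
      _ ≤ ∫ t, G t := setIntegral_le_integral intG (ae_of_all _ fun t => by positivity)
      _ = exp M * ∫ t, exp (-(c/2)*(t-T)^2) := by rw [hG]; exact integral_const_mul _ _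
      _ = exp M * Real.sqrt (π/(c/2)) := by
          rw [show (fun t : ℝ => exp (-(c/2)*(t-T)^2)) = fun t => (fun s => exp (-(c/2)*s^2)) (t - T) from rfl,
            integral_sub_right_eq_self (fun s : ℝ => exp (-(c/2)*s^2)) T, integral_gaussian]
      _ = exp M * Real.sqrt (2*π/c) := by
          rw [show π/(c/2) = 2*π/c by field_simp]
  set b := (1-q)/2*σ with hb
  have hbpos : 0 < b := by positivity
  set H : ℝ → ℝ := fun t => exp M * exp (-(b*(t-2*T))) with hH
  have intH : IntegrableOn H (Ioi (2*T)) := (integrable_exp_tail (2*T) b hbpos).const_mul _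
  have hfH : ∀ t ∈ Ioi (2*T), f t ≤ H t := by
    intro t ht
    have hk := tail_ineq q θ σ T hq0 hq1 hθ hσ hT t (le_of_lt (mem_Ioi.1 ht))
    calc f t = exp (θ*t^q - σ*t) := rfl
      _ ≤ exp (M - b*(t-2*T)) := exp_le_exp.2 (by rw [hb]; linarith)
      _ = exp M * exp (-(b*(t-2*T))) := by rw [← Real.exp_add]; ring_nf
  have int2 : IntegrableOn f (Ioi (2*T)) := by
    apply Integrable.mono' intH hfc.aestronglyMeasurable.restrict
    rw [ae_restrict_iff' measurableSet_Ioi]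
    filter_upwards with t ht
    rw [Real.norm_eq_abs, abs_of_pos (exp_pos _)]
    exact hfH t ht
  have step2 : ∫ t in Ioi (2*T), f t ≤ exp M * (1/b) := by
    calc ∫ t in Ioi (2*T), f t ≤ ∫ t in Ioi (2*T), H t :=
        setIntegral_mono_on int2 intH measurableSet_Ioi hfH
      _ = exp M * ∫ t in Ioi (2*T), exp (-(b*(t-2*T))) := by
          rw [hH]; exact integral_const_mul _ _
      _ = exp M * (1/b) := by rw [integral_exp_tail (2*T) b hbpos]
  have hsplit : ∫ t in Ioi (0:ℝ), f t
      = (∫ t in Ioc (0:ℝ) (2*T), f t) + ∫ t in Ioi (2*T), f t := by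
    rw [← Ioc_union_Ioi_eq_Ioi (show (0:ℝ) ≤ 2*T by positivity)]
    exact setIntegral_union (Ioc_disjoint_Ioi le_rfl) measurableSet_Ioi int1 int2
  have hMeq := M_eq q θ σ T hq0 hq1 hθ hσ hT
  have hsq := sqrt_term_eq q θ σ T hq0 hq1 hθ hσ hT
  rw [← hc] at hsq
  have hEexp : exp ((1 - q) * θ * (q * θ) ^ (q / (1 - q)) * σ ^ (-(q / (1 - q)))) = exp M := by
    rw [hM, hMeq]
  calc ∫ t in Ioi (0:ℝ), f t ≤ exp M * Real.sqrt (2*π/c) + exp M * (1/b) := by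
        rw [hsplit]; exact add_le_add step1 step2
    _ ≤ (1 / σ) * ((2 : ℝ) ^ (1 - q / 2) * (q * θ) ^ (1 / (2 * (1 - q))) *
            Real.sqrt (2 * π / (1 - q)) * σ ^ (-(q / (2 * (1 - q)))) + 4 / (1 - q)) * exp M := by
        rw [hsq, hb]
        have hexpM : 0 < exp M := exp_pos M
        have h2 : 1/((1-q)/2*σ) = 2/((1-q)*σ) := by field_simp
        rw [h2]
        have hA : (0:ℝ) ≤ 1/σ * ((2:ℝ)^(1-q/2) * (q*θ)^(1/(2*(1-q))) * Real.sqrt (2*π/(1-q))) * σ^(-(q/(2*(1-q)))) := by positivity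
        have : 2/((1-q)*σ) ≤ (1/σ) * (4/(1-q)) := by
          have e : (1:ℝ)/σ*(4/(1-q)) = 4/((1-q)*σ) := by field_simp
          rw [e]
          gcongr
          norm_num
        nlinarith [hexpM, hA]
    _ = (1 / σ) * ((2 : ℝ) ^ (1 - q / 2) * (q * θ) ^ (1 / (2 * (1 - q))) *
            Real.sqrt (2 * π / (1 - q)) * σ ^ (-(q / (2 * (1 - q)))) + 4 / (1 - q)) *
        Real.exp ((1 - q) * θ * (q * θ) ^ (q / (1 - q)) * σ ^ (-(q / (1 - q)))) := by
        rw [hEexp]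
end

section
/- Let f : ℝ_{≥0} → ℂ be measurable with ∫_0^∞ e^{-σt}|f(t)| dt < ∞ for every σ > σ₀ ≥ 0, and suppose its Laplace transform F(ζ) = ∫_0^∞ e^{-tζ} f(t) dt vanishes on a nonempty open subset of the half-plane {Re ζ > σ₀}. Then f = 0 almost everywhere on ℝ_{≥0}. -/
open MeasureTheory Complex Filter Real
open scoped SchwartzMap FourierTransform ContDiff

-- compactly supported smooth functions are Schwartz
lemma exists_schwartz_of_compactSupport (φ : ℝ → ℂ) (hφ : ContDiff ℝ ∞ φ)
    (hsupp : HasCompactSupport φ) : ∃ ψ : 𝓢(ℝ, ℂ), ⇑ψ = φ := by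
  refine ⟨⟨φ, hφ, fun k n => ?_⟩, rfl⟩
  have hcs : HasCompactSupport (fun x : ℝ => ‖x‖ ^ k * ‖iteratedFDeriv ℝ n φ x‖) :=
    ((hsupp.iteratedFDeriv n).norm).mul_left
  have hcont : Continuous (fun x : ℝ => ‖x‖ ^ k * ‖iteratedFDeriv ℝ n φ x‖) :=
    ((continuous_norm).pow k).mul (hφ.continuous_iteratedFDeriv (by exact_mod_cast le_top)).norm
  obtain ⟨C, hC⟩ := hcs.exists_bound_of_continuous hcont
  exact ⟨C, fun x => (le_abs_self _).trans (by simpa only [Real.norm_eq_abs] using hC x)⟩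

-- Integrability of the Laplace integrand
lemma laplace_integrand_integrable (σ₀ : ℝ) (f : ℝ → ℂ) (hmeas : Measurable f)
    (hint : ∀ σ : ℝ, σ₀ < σ →
      Integrable (fun t : ℝ => Real.exp (-σ * t) * ‖f t‖) (volume.restrict (Set.Ioi 0)))
    (ζ : ℂ) (hζ : σ₀ < ζ.re) :
    Integrable (fun t : ℝ => Complex.exp (-(t : ℂ) * ζ) * f t) (volume.restrict (Set.Ioi 0)) := by
  refine (hint ζ.re hζ).mono' ?_ ?_
  · exact ((Complex.measurable_exp.comp ((Complex.measurable_ofReal.neg).mul_const ζ)).mul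
      hmeas).aestronglyMeasurable
  · filter_upwards with t
    rw [norm_mul, Complex.norm_exp]
    have : (-(t : ℂ) * ζ).re = -ζ.re * t := by simp [mul_comm]
    rw [this]

lemma laplace_eq_zero_on_halfplane (σ₀ : ℝ) (f : ℝ → ℂ) (hmeas : Measurable f)
    (hint : ∀ σ : ℝ, σ₀ < σ →
      Integrable (fun t : ℝ => Real.exp (-σ * t) * ‖f t‖) (volume.restrict (Set.Ioi 0)))
    (U : Set ℂ) (hUopen : IsOpen U) (hUne : U.Nonempty)
    (hUsub : U ⊆ {ζ : ℂ | σ₀ < ζ.re})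
    (hvanish : ∀ ζ ∈ U, (∫ t in Set.Ioi (0 : ℝ), Complex.exp (-(t : ℂ) * ζ) * f t) = 0)
    (ζ : ℂ) (hζ : σ₀ < ζ.re) :
    (∫ t in Set.Ioi (0 : ℝ), Complex.exp (-(t : ℂ) * ζ) * f t) = 0 := by
  set H : Set ℂ := {ζ : ℂ | σ₀ < ζ.re} with hH
  set F : ℂ → ℂ := fun ζ => ∫ t in Set.Ioi (0 : ℝ), Complex.exp (-(t : ℂ) * ζ) * f t with hF
  have hHopen : IsOpen H := isOpen_lt continuous_const Complex.continuous_re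
  have hderiv : ∀ ζ₀ ∈ H, HasDerivAt F
      (∫ t in Set.Ioi (0 : ℝ), -(t : ℂ) * Complex.exp (-(t : ℂ) * ζ₀) * f t) ζ₀ := by
    intro ζ₀ hζ₀
    have hζ₀' : σ₀ < ζ₀.re := hζ₀
    set ε : ℝ := (ζ₀.re - σ₀) / 2 with hε
    have hε_pos : 0 < ε := by simp only [hε]; linarith
    have key := hasDerivAt_integral_of_dominated_loc_of_deriv_le
      (μ := volume.restrict (Set.Ioi 0))
      (F := fun ζ t => Complex.exp (-(t : ℂ) * ζ) * f t)
      (F' := fun ζ t => -(t : ℂ) * Complex.exp (-(t : ℂ) * ζ) * f t)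
      (x₀ := ζ₀)
      (bound := fun t : ℝ => (2 / ε) * (Real.exp (-(σ₀ + ε / 2) * t) * ‖f t‖))
      (Metric.ball_mem_nhds ζ₀ hε_pos) ?_ ?_ ?_ ?_ ?_ ?_
    · exact key.2
    · filter_upwards with ζ
      exact ((Complex.measurable_exp.comp ((Complex.measurable_ofReal.neg).mul_const ζ)).mul
        hmeas).aestronglyMeasurable
    · exact laplace_integrand_integrable σ₀ f hmeas hint ζ₀ hζ₀'
    · exact (((Complex.measurable_ofReal.neg).mul
        (Complex.measurable_exp.comp ((Complex.measurable_ofReal.neg).mul_const ζ₀))).mul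
        hmeas).aestronglyMeasurable
    · rw [ae_restrict_iff' measurableSet_Ioi]
      filter_upwards with t ht ζ hζball
      have hre : σ₀ + ε < ζ.re := by
        have h1 : |ζ.re - ζ₀.re| ≤ ‖ζ - ζ₀‖ := by
          rw [← Complex.sub_re]; exact Complex.abs_re_le_norm _
        have h2 : ‖ζ - ζ₀‖ < ε := by rwa [Metric.mem_ball, dist_eq_norm] at hζball
        have h3 : ζ₀.re = σ₀ + 2 * ε := by simp only [hε]; ring
        have := abs_lt.1 (lt_of_le_of_lt h1 h2)
        linarith [this.1]
      have ht' : (0:ℝ) < t := ht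
      rw [norm_mul, norm_mul]
      have hexp : ‖Complex.exp (-(t : ℂ) * ζ)‖ = Real.exp (-ζ.re * t) := by
        rw [Complex.norm_exp]
        congr 1
        simp [mul_comm]
      rw [hexp]
      have hnt : ‖(-(t:ℂ))‖ = t := by
        simp [abs_of_pos ht']
      rw [hnt]
      have step1 : t * Real.exp (-ζ.re * t) ≤ t * Real.exp (-(σ₀ + ε) * t) := by
        apply mul_le_mul_of_nonneg_left _ ht'.le
        apply Real.exp_le_exp.2
        nlinarith
      have step2 : t * Real.exp (-(σ₀ + ε) * t) ≤ (2 / ε) * Real.exp (-(σ₀ + ε/2) * t) := by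
        have : Real.exp (-(σ₀ + ε) * t) = Real.exp (-(ε/2) * t) * Real.exp (-(σ₀ + ε/2) * t) := by
          rw [← Real.exp_add]; ring_nf
        rw [this, ← mul_assoc]
        apply mul_le_mul_of_nonneg_right _ (Real.exp_pos _).le
        -- t * exp(-(ε/2) t) ≤ 2/ε  since  ε t/2 ≤ exp(ε t /2)
        have h4 : ε / 2 * t ≤ Real.exp (ε / 2 * t) := (Real.add_one_le_exp _).trans' (by linarith)
        have h5 : t ≤ 2/ε * Real.exp (ε/2 * t) := by
          have h6 := mul_le_mul_of_nonneg_left h4 (by positivity : (0:ℝ) ≤ 2/ε)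
          calc t = 2/ε * (ε/2*t) := by field_simp
            _ ≤ _ := h6
        calc t * Real.exp (-(ε/2)*t) ≤ (2/ε*Real.exp (ε/2*t)) * Real.exp (-(ε/2)*t) :=
              mul_le_mul_of_nonneg_right h5 (Real.exp_pos _).le
          _ = 2/ε * Real.exp (ε/2*t + -(ε/2)*t) := by rw [Real.exp_add]; ring
          _ = 2/ε := by simp
      calc t * Real.exp (-ζ.re * t) * ‖f t‖
          ≤ (2 / ε) * Real.exp (-(σ₀ + ε/2) * t) * ‖f t‖ := by
            apply mul_le_mul_of_nonneg_right (step1.trans step2) (norm_nonneg _)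
        _ = (2 / ε) * (Real.exp (-(σ₀ + ε/2) * t) * ‖f t‖) := by ring
    · exact (hint (σ₀ + ε/2) (by linarith)).const_mul _
    · filter_upwards with t ζ hζball
      have h1 : HasDerivAt (fun ζ : ℂ => -(t:ℂ) * ζ) (-(t:ℂ)) ζ := by
        simpa using (hasDerivAt_id ζ).const_mul (-(t:ℂ))
      have h2 := (h1.cexp).mul_const (f t)
      convert h2 using 1
      · rfl
      ring
  have hdiff : DifferentiableOn ℂ F H := fun z hz =>
    (hderiv z hz).differentiableAt.differentiableWithinAt
  have hanalytic : AnalyticOnNhd ℂ F H := hdiff.analyticOnNhd hHopen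
  have hconn : IsPreconnected H := (convex_halfSpace_re_gt σ₀).isPreconnected
  obtain ⟨z₀, hz₀⟩ := hUne
  have hz₀H : z₀ ∈ H := hUsub hz₀
  have hev : F =ᶠ[nhds z₀] 0 := by
    filter_upwards [hUopen.mem_nhds hz₀] with z hz
    exact hvanish z hz
  exact hanalytic.eqOn_zero_of_preconnected_of_eventuallyEq_zero hconn hz₀H hev hζ

theorem laplace_injectivity (σ₀ : ℝ) (hσ₀ : 0 ≤ σ₀) (f : ℝ → ℂ)
    (hmeas : Measurable f)
    (hint : ∀ σ : ℝ, σ₀ < σ →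
      Integrable (fun t : ℝ => Real.exp (-σ * t) * ‖f t‖) (volume.restrict (Set.Ioi 0)))
    (U : Set ℂ) (hUopen : IsOpen U) (hUne : U.Nonempty)
    (hUsub : U ⊆ {ζ : ℂ | σ₀ < ζ.re})
    (hvanish : ∀ ζ ∈ U, (∫ t in Set.Ioi (0 : ℝ), Complex.exp (-(t : ℂ) * ζ) * f t) = 0) :
    ∀ᵐ t ∂(volume.restrict (Set.Ici (0 : ℝ))), f t = 0 := by
  have hF0 := laplace_eq_zero_on_halfplane σ₀ f hmeas hint U hUopen hUne hUsub hvanish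
  set σ : ℝ := σ₀ + 1 with hσ
  have hσgt : σ₀ < σ := by simp [hσ]
  set g : ℝ → ℂ := Set.indicator (Set.Ioi 0) (fun t => (Real.exp (-σ * t) : ℂ) * f t) with hg
  have hg_int : Integrable g := by
    rw [hg, integrable_indicator_iff measurableSet_Ioi]
    refine (hint σ hσgt).mono' ?_ ?_
    · exact ((Complex.measurable_ofReal.comp (Real.measurable_exp.comp
        (measurable_id.const_mul (-σ)))).mul hmeas).aestronglyMeasurable
    · filter_upwards with t
      rw [norm_mul, Complex.norm_real, Real.norm_eq_abs, abs_of_pos (Real.exp_pos _)]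
  have hFour : ∀ w : ℝ, 𝓕 g w = 0 := by
    intro w
    have hmem : σ₀ < ((σ : ℂ) + (2 * π * w) * Complex.I).re := by
      simp [hσ]
    have h0 := hF0 ((σ : ℂ) + (2 * π * w) * Complex.I) hmem
    rw [Real.fourier_real_eq, ← h0, ← integral_indicator measurableSet_Ioi]
    congr 1
    funext t
    by_cases ht : t ∈ Set.Ioi 0
    · rw [hg, Set.indicator_of_mem ht, Set.indicator_of_mem ht]
      rw [Circle.smul_def, Real.fourierChar_apply, smul_eq_mul, Complex.ofReal_exp,
        ← mul_assoc, ← Complex.exp_add]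
      congr 2
      push_cast
      ring
    · rw [hg, Set.indicator_of_notMem ht, Set.indicator_of_notMem ht, smul_zero]
  have hinner_flip : (innerₗ ℝ).flip = innerₗ ℝ :=
    LinearMap.ext fun x => LinearMap.ext fun y => real_inner_comm x y
  have hg_zero : ∀ᵐ t : ℝ, g t = 0 := by
    apply ae_eq_zero_of_integral_contDiff_smul_eq_zero hg_int.locallyIntegrable
    intro φ hφ hφsupp
    have hφc : ContDiff ℝ ∞ (fun x : ℝ => (φ x : ℂ)) :=
      Complex.ofRealCLM.contDiff.comp hφ
    have hφcs : HasCompactSupport (fun x : ℝ => (φ x : ℂ)) :=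
      hφsupp.comp_left (g := Complex.ofReal) Complex.ofReal_zero
    obtain ⟨ψ, hψ⟩ := exists_schwartz_of_compactSupport _ hφc hφcs
    set χ := (SchwartzMap.fourierTransformCLE ℂ 𝓢(ℝ, ℂ) (F := 𝓢(ℝ, ℂ))).symm ψ with hχ
    have hχF : 𝓕 ⇑χ = ⇑ψ := by
      have h := (SchwartzMap.fourierTransformCLE ℂ 𝓢(ℝ, ℂ) (F := 𝓢(ℝ, ℂ))).apply_symm_apply ψ
      rw [← h]
      rfl
    have hflip := VectorFourier.integral_fourierIntegral_smul_eq_flip (L := innerₗ ℝ)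
      Real.continuous_fourierChar continuous_inner (χ.integrable (μ := volume)) hg_int
    rw [hinner_flip] at hflip
    have key : ∫ x : ℝ, (φ x : ℂ) * g x = 0 := by
      calc ∫ x : ℝ, (φ x : ℂ) * g x
          = ∫ ξ : ℝ, (𝓕 ⇑χ) ξ • g ξ := by
            rw [hχF, hψ]; simp [smul_eq_mul]
        _ = ∫ x : ℝ, χ x • (𝓕 g) x := hflip
        _ = 0 := by simp [hFour]
    simpa [Complex.real_smul] using key
  rw [ae_restrict_iff' measurableSet_Ici]
  have hne : ∀ᵐ t : ℝ, t ≠ 0 := by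
    rw [ae_iff]
    convert Real.volume_singleton (a := 0) using 2
    ext x; simp
  filter_upwards [hg_zero, hne] with t hgt hnt htIci
  have htpos : (0:ℝ) < t := lt_of_le_of_ne htIci (Ne.symm hnt)
  rw [hg, Set.indicator_of_mem (Set.mem_Ioi.2 htpos)] at hgt
  have hexp_ne : (Real.exp (-σ*t) : ℂ) ≠ 0 := Complex.ofReal_ne_zero.2 (Real.exp_ne_zero _)
  exact (mul_eq_zero.1 hgt).resolve_left hexp_ne
end
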